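/- Convolution recursion for the transition functions: define φ_{0,1}(n,y) = ψ(n,y) where ψ(n,z) = ∑_{j=0}^{n} C(n,j) (n−2a−b−c+1)_j / ((−a−c+1)_j (−a)_j ((z+1)/2 − j)! (a − (z+1)/2)!) for odd z and ψ(n,z)=0 for even z, and φ_{0,r+1}(n,y) = φ_{0,r}(n,y+1) + φ_{0,r}(n,y−1). Then for all r ≥ 1, φ_{0,r}(n,y) = (a+1)_{r−1} ∑_{j=0}^{n} C(n,j) (n−2a−b−c+1)_j / ((−a−c+1)_j (−a−r+1)_j) · 1/(((y+r)/2 − j)! (a−1−(y−r)/2)!), with 1/m! = 0 for m < 0. -/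

import Mathlib

open Finset

/-- The Pochhammer symbol `(a)_n = a(a+1)⋯(a+n-1)` for a real argument. -/
noncomputable def poch (a : ℝ) (n : ℕ) : ℝ := ∏ i ∈ Finset.range n, (a + i)

/-- `1/k!` for an integer `k`, with the convention `1/k! = 0` for `k < 0`. -/
noncomputable def invfact (k : ℤ) : ℝ :=
  if 0 ≤ k then ((Nat.factorial k.toNat : ℕ) : ℝ)⁻¹ else 0

lemma invfact_neg {m : ℤ} (hm : m < 0) : invfact m = 0 := if_neg (by omega)

lemma invfact_zero : invfact 0 = 1 := by simp [invfact, Nat.factorial]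

lemma invfact_pred (m : ℤ) (hm : 1 ≤ m) : invfact (m - 1) = m * invfact m := by
  obtain ⟨t, rfl⟩ : ∃ t : ℕ, m = (t : ℤ) + 1 := ⟨(m - 1).toNat, by omega⟩
  rw [invfact, invfact, if_pos (by omega), if_pos (by omega)]
  have h1 : ((t : ℤ) + 1 - 1).toNat = t := by omega
  have h2 : ((t : ℤ) + 1).toNat = t + 1 := by omega
  rw [h1, h2, Nat.factorial_succ]
  have ht : (Nat.factorial t : ℝ) ≠ 0 := Nat.cast_ne_zero.mpr t.factorial_ne_zero
  push_cast
  field_simp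

lemma invfact_conv (m M : ℤ) :
    invfact m * invfact (M - 1) + invfact (m - 1) * invfact M
      = (m + M) * (invfact m * invfact M) := by
  rcases lt_trichotomy m 0 with hm | hm | hm
  · rw [invfact_neg hm, invfact_neg (by omega : m - 1 < 0)]; ring
  · subst hm
    rcases lt_trichotomy M 0 with hM | hM | hM
    · rw [invfact_neg hM, invfact_neg (by omega : M - 1 < 0)]; ring
    · subst hM; rw [invfact_neg (by omega : (0:ℤ) - 1 < 0)]; push_cast; ring
    · rw [invfact_neg (by omega : (0:ℤ) - 1 < 0), invfact_pred M hM, invfact_zero]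
      ring
  · rcases lt_trichotomy M 0 with hM | hM | hM
    · rw [invfact_neg hM, invfact_neg (by omega : M - 1 < 0)]; ring
    · subst hM; rw [invfact_neg (by omega : (0:ℤ) - 1 < 0), invfact_pred m hm, invfact_zero]
      push_cast; ring
    · rw [invfact_pred m hm, invfact_pred M hM]; push_cast; ring

lemma poch_succ (x : ℝ) (j : ℕ) : poch x (j + 1) = poch x j * (x + j) :=
  Finset.prod_range_succ _ _

lemma poch_succ' (x : ℝ) (j : ℕ) : poch x (j + 1) = x * poch (x + 1) j := by
  rw [poch, Finset.prod_range_succ']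
  simp only [Nat.cast_zero, add_zero]
  rw [mul_comm, poch]
  congr 1
  refine Finset.prod_congr rfl fun i _ => ?_
  push_cast; ring

lemma poch_shift (x : ℝ) (j : ℕ) : (x + j) * poch x j = x * poch (x + 1) j := by
  rw [← poch_succ', poch_succ]; ring

lemma poch_neg_ne_zero (x : ℝ) (j : ℕ) (h : x + j ≤ 0) : poch x j ≠ 0 := by
  refine Finset.prod_ne_zero_iff.mpr fun i hi => ?_
  have hij : (i : ℝ) < j := by exact_mod_cast Finset.mem_range.mp hi
  intro hzero; nlinarith

/-- The function `ψ(n,z)` of (3.18): nonzero only for odd `z`. -/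
noncomputable def psiFun (a b c n : ℕ) (z : ℤ) : ℝ :=
  if Odd z then
    ∑ j ∈ Finset.range (n + 1),
      (n.choose j : ℝ) * poch ((n : ℝ) - 2 * a - b - c + 1) j /
          (poch (-(a : ℝ) - c + 1) j * poch (-(a : ℝ)) j) *
        invfact ((z + 1) / 2 - j) * invfact ((a : ℤ) - (z + 1) / 2)
  else 0

/-- `phi0 a b c n k = φ_{0,k+1}(n,·)`, defined by `φ_{0,1} = ψ` and the
recursion `φ_{0,r+1}(n,y) = φ_{0,r}(n,y+1) + φ_{0,r}(n,y-1)`. -/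
noncomputable def phi0 (a b c n : ℕ) : ℕ → ℤ → ℝ
  | 0 => psiFun a b c n
  | k + 1 => fun y => phi0 a b c n k (y + 1) + phi0 a b c n k (y - 1)

/-- Closed formula (3.20) for the convolved transition functions `φ_{0,r}`,
here with `r = k+1 ≥ 1`, valid for `y + r` even. -/
theorem phi0_closed_form (a b c n : ℕ) (ha : 0 < a) (hb : 0 < b) (hc : 0 < c)
    (hn : n ≤ a - 1) (k : ℕ) (y : ℤ) (hy : Even (y + (k + 1 : ℕ))) :
    phi0 a b c n k y
      = poch ((a : ℝ) + 1) k *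
        ∑ j ∈ Finset.range (n + 1),
          (n.choose j : ℝ) * poch ((n : ℝ) - 2 * a - b - c + 1) j /
              (poch (-(a : ℝ) - c + 1) j * poch (-(a : ℝ) - (k + 1) + 1) j) *
            invfact ((y + (k + 1 : ℕ)) / 2 - j) *
            invfact ((a : ℤ) - 1 - (y - (k + 1 : ℕ)) / 2) := by
  have hna : n + 1 ≤ a := by omega
  induction k generalizing y with
  | zero =>
    have hodd : Odd y := by
      rw [Int.even_iff] at hy; rw [Int.odd_iff]; push_cast at hy; omega
    have hy2 : y % 2 = 1 := Int.odd_iff.mp hodd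
    show psiFun a b c n y = _
    rw [psiFun, if_pos hodd]
    have hp : poch ((a : ℝ) + 1) 0 = 1 := by simp [poch]
    rw [hp, one_mul]
    refine Finset.sum_congr rfl fun j hj => ?_
    have e1 : -(a : ℝ) - ((0 : ℕ) + 1) + 1 = -(a : ℝ) := by push_cast; ring
    have e2 : (y + ((0 + 1 : ℕ) : ℤ)) / 2 - j = (y + 1) / 2 - j := by norm_num
    have e3 : (a : ℤ) - 1 - (y - ((0 + 1 : ℕ) : ℤ)) / 2 = (a : ℤ) - (y + 1) / 2 := by
      omega
    rw [e1, e2, e3]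
  | succ k ih =>
    have h1 : Even ((y + 1) + ((k + 1 : ℕ) : ℤ)) := by
      rw [Int.even_iff] at hy ⊢; push_cast at hy ⊢; omega
    have h2 : Even ((y - 1) + ((k + 1 : ℕ) : ℤ)) := by
      rw [Int.even_iff] at hy ⊢; push_cast at hy ⊢; omega
    obtain ⟨t, ht⟩ := hy
    push_cast at ht
    show phi0 a b c n k (y + 1) + phi0 a b c n k (y - 1) = _
    rw [ih (y + 1) h1, ih (y - 1) h2, ← mul_add, poch_succ, mul_assoc]
    congr 1
    rw [← Finset.sum_add_distrib, Finset.mul_sum]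
    refine Finset.sum_congr rfl fun j hj => ?_
    have hjn : j ≤ n := Nat.lt_succ_iff.mp (Finset.mem_range.mp hj)
    have hja : (j : ℝ) + 1 ≤ a := by exact_mod_cast Nat.le_trans (Nat.succ_le_succ hjn) hna
    have hc1 : (1 : ℝ) ≤ c := by exact_mod_cast hc
    have hk0 : (0 : ℝ) ≤ (k : ℝ) := Nat.cast_nonneg k
    have e1 : (y + 1 + ((k + 1 : ℕ) : ℤ)) / 2 - j = t - j := by push_cast; omega
    have e2 : (a : ℤ) - 1 - (y + 1 - ((k + 1 : ℕ) : ℤ)) / 2 = (a : ℤ) + k + 1 - t - 1 := by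
      push_cast; omega
    have e3 : (y - 1 + ((k + 1 : ℕ) : ℤ)) / 2 - j = t - j - 1 := by push_cast; omega
    have e4 : (a : ℤ) - 1 - (y - 1 - ((k + 1 : ℕ) : ℤ)) / 2 = (a : ℤ) + k + 1 - t := by
      push_cast; omega
    have e5 : (y + ((k + 1 + 1 : ℕ) : ℤ)) / 2 - j = t - j := by push_cast; omega
    have e6 : (a : ℤ) - 1 - (y - ((k + 1 + 1 : ℕ) : ℤ)) / 2 = (a : ℤ) + k + 1 - t := by
      push_cast; omega
    rw [e1, e2, e3, e4, e5, e6]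
    have eq0 : -(a : ℝ) - ((k : ℝ) + 1) + 1 = (-(a : ℝ) - k - 1) + 1 := by ring
    have eq1 : -(a : ℝ) - (((k + 1 : ℕ) : ℝ) + 1) + 1 = -(a : ℝ) - k - 1 := by
      push_cast; ring
    rw [eq0, eq1]
    set x : ℝ := -(a : ℝ) - k - 1 with hx
    have hP : poch (-(a : ℝ) - c + 1) j ≠ 0 :=
      poch_neg_ne_zero _ _ (by linarith)
    have hQ : poch (x + 1) j ≠ 0 :=
      poch_neg_ne_zero _ _ (by rw [hx]; linarith)
    have hQ' : poch x j ≠ 0 :=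
      poch_neg_ne_zero _ _ (by rw [hx]; linarith)
    have hps := poch_shift x j
    have hconv := invfact_conv (t - j) ((a : ℤ) + k + 1 - t)
    push_cast at hconv
    have key : (n.choose j : ℝ) * poch ((n : ℝ) - 2 * a - b - c + 1) j /
          (poch (-(a : ℝ) - c + 1) j * poch (x + 1) j) * ((a : ℝ) + k + 1 - j)
        = ((a : ℝ) + 1 + k) * ((n.choose j : ℝ) * poch ((n : ℝ) - 2 * a - b - c + 1) j /
          (poch (-(a : ℝ) - c + 1) j * poch x j)) := by
      rw [div_mul_eq_mul_div, mul_div_assoc', div_eq_div_iff (mul_ne_zero hP hQ) (mul_ne_zero hP hQ')]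
      linear_combination (-((n.choose j : ℝ) * poch ((n : ℝ) - 2 * a - b - c + 1) j *
        poch (-(a : ℝ) - c + 1) j)) * hps +
        ((n.choose j : ℝ) * poch ((n : ℝ) - 2 * a - b - c + 1) j *
        poch (-(a : ℝ) - c + 1) j * (poch x j - poch (x + 1) j)) * hx
    linear_combination ((n.choose j : ℝ) * poch ((n : ℝ) - 2 * a - b - c + 1) j /
        (poch (-(a : ℝ) - c + 1) j * poch (x + 1) j)) * hconv +
      (invfact (t - j) * invfact ((a : ℤ) + k + 1 - t)) * key
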